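/- Let 1 < p < ∞ and let (Ω,μ) be a measure space. For every measurable function f on Ω, ‖f‖^#_{L(p,∞)} = ‖f‖^{##}_{L(p,∞)}; that is, sup_{s>0} s^{1/p}( f**(s) − f*(s) ) = sup_{t>0} (λ_f(t))^{−(1−1/p)} ∫_t^∞ λ_f(s) ds. -/

import Mathlib

open MeasureTheory Set
open scoped ENNReal NNReal

noncomputable section

/-- The distribution function `λ_f(t) = μ {x : |f(x)| > t}`. -/
def distFun {α : Type*} [MeasurableSpace α] (μ : Measure α) (f : α → ℝ) (t : ℝ) : ℝ≥0∞ :=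
  μ {x | t < |f x|}

/-- The non-increasing rearrangement `f*(t) = inf {s > 0 : λ_f(s) ≤ t}`. -/
def rearr {α : Type*} [MeasurableSpace α] (μ : Measure α) (f : α → ℝ) (t : ℝ) : ℝ≥0∞ :=
  sInf (ENNReal.ofReal '' {s : ℝ | 0 < s ∧ distFun μ f s ≤ ENNReal.ofReal t})

/-- The maximal function `f**(t) = (1/t) ∫₀ᵗ f*(s) ds`. -/
def dstar {α : Type*} [MeasurableSpace α] (μ : Measure α) (f : α → ℝ) (t : ℝ) : ℝ≥0∞ :=
  (∫⁻ s in Set.Ioc (0 : ℝ) t, rearr μ f s) / ENNReal.ofReal t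

/-- The `L(∞,∞)` "norm" : `sup_{t>0} (f**(t) - f*(t))`. -/
def oscNorm {α : Type*} [MeasurableSpace α] (μ : Measure α) (f : α → ℝ) : ℝ≥0∞ :=
  ⨆ (t : ℝ) (_ : 0 < t), dstar μ f t - rearr μ f t

/-- The Marcinkiewicz `L(p,∞)` quasinorm `‖f‖*_{L(p,∞)} = sup_{t>0} t (λ_f(t))^{1/p}`. -/
def wkNorm {α : Type*} [MeasurableSpace α] (μ : Measure α) (p : ℝ) (f : α → ℝ) : ℝ≥0∞ :=
  ⨆ (t : ℝ) (_ : 0 < t), ENNReal.ofReal t * distFun μ f t ^ (1 / p)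

/-- `‖f‖_{L(p,∞)} = sup_{s>0} s^{1/p} f**(s)`. -/
def wkNormStarStar {α : Type*} [MeasurableSpace α] (μ : Measure α) (p : ℝ) (f : α → ℝ) : ℝ≥0∞ :=
  ⨆ (s : ℝ) (_ : 0 < s), ENNReal.ofReal s ^ (1 / p) * dstar μ f s

/-- `‖f‖*_{L(p,∞)} = sup_{s>0} s^{1/p} f*(s)` (rearrangement form). -/
def wkNormStar {α : Type*} [MeasurableSpace α] (μ : Measure α) (p : ℝ) (f : α → ℝ) : ℝ≥0∞ :=
  ⨆ (s : ℝ) (_ : 0 < s), ENNReal.ofReal s ^ (1 / p) * rearr μ f s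

/-- `‖f‖^#_{L(p,∞)} = sup_{s>0} s^{1/p} (f**(s) - f*(s))`. -/
def sharpNorm {α : Type*} [MeasurableSpace α] (μ : Measure α) (p : ℝ) (f : α → ℝ) : ℝ≥0∞ :=
  ⨆ (s : ℝ) (_ : 0 < s), ENNReal.ofReal s ^ (1 / p) * (dstar μ f s - rearr μ f s)

/-- `‖f‖^{##}_{L(p,∞)} = sup_{t>0} (λ_f(t))^{-(1-1/p)} ∫_t^∞ λ_f(s) ds`. -/
def sharpSharpNorm {α : Type*} [MeasurableSpace α] (μ : Measure α) (p : ℝ) (f : α → ℝ) : ℝ≥0∞ :=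
  ⨆ (t : ℝ) (_ : 0 < t),
    distFun μ f t ^ (-(1 - 1 / p)) * ∫⁻ s in Set.Ioi t, distFun μ f s

/-- `‖f‖^{##}_{L(∞,∞)} = inf {C : ∫_t^∞ λ_f(s) ds ≤ C λ_f(t) for all t > 0}`. -/
def sharpSharpInf {α : Type*} [MeasurableSpace α] (μ : Measure α) (f : α → ℝ) : ℝ≥0∞ :=
  sInf {C : ℝ≥0∞ | ∀ t : ℝ, 0 < t →
    ∫⁻ s in Set.Ioi t, distFun μ f s ≤ C * distFun μ f t}

/-- O'Neil's quantity `inf {C^{1/p} : ∫_t^∞ λ_f(s) ds ≤ C t^{1-p} for all t > 0}`. -/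
def oneilQuantity {α : Type*} [MeasurableSpace α] (μ : Measure α) (p : ℝ) (f : α → ℝ) : ℝ≥0∞ :=
  sInf {D : ℝ≥0∞ | ∃ C : ℝ≥0∞, D = C ^ (1 / p) ∧
    ∀ t : ℝ, 0 < t → ∫⁻ s in Set.Ioi t, distFun μ f s ≤ C * ENNReal.ofReal t ^ (1 - p)}

/-- A cube in `ℝⁿ` with sides parallel to the coordinate axes. -/
def IsCube {n : ℕ} (Q : Set (Fin n → ℝ)) : Prop :=
  ∃ (a : Fin n → ℝ) (l : ℝ), 0 < l ∧ Q = Set.univ.pi fun i => Set.Icc (a i) (a i + l)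

/-- A countable family of subcubes of `Q₀` with pairwise disjoint interiors. -/
def IsPackingIn {n : ℕ} (Q₀ : Set (Fin n → ℝ)) (Q : ℕ → Set (Fin n → ℝ)) : Prop :=
  (∀ i, IsCube (Q i) ∧ Q i ⊆ Q₀) ∧
    Pairwise fun i j => interior (Q i) ∩ interior (Q j) = ∅

/-- The average `f_Q = (1/|Q|) ∫_Q f`. -/
def cubeAvg {n : ℕ} (f : (Fin n → ℝ) → ℝ) (Q : Set (Fin n → ℝ)) : ℝ :=
  ⨍ x in Q, f x

/-- The mean oscillation `(1/|Q|) ∫_Q |f - f_Q|`. -/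
def meanOsc {n : ℕ} (f : (Fin n → ℝ) → ℝ) (Q : Set (Fin n → ℝ)) : ℝ :=
  ⨍ x in Q, |f x - cubeAvg f Q|

/-- The John–Nirenberg functional `JN_p(f,Q₀)`. -/
def JN {n : ℕ} (p : ℝ) (f : (Fin n → ℝ) → ℝ) (Q₀ : Set (Fin n → ℝ)) : ℝ≥0∞ :=
  ⨆ (Q : ℕ → Set (Fin n → ℝ)) (_ : IsPackingIn Q₀ Q),
    (∑' i, volume (Q i) * ENNReal.ofReal (meanOsc f (Q i)) ^ p) ^ (1 / p)

/-- The BMO norm `‖f‖_{BMO(Q₀)}`. -/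
def bmoNorm {n : ℕ} (f : (Fin n → ℝ) → ℝ) (Q₀ : Set (Fin n → ℝ)) : ℝ≥0∞ :=
  ⨆ (Q : Set (Fin n → ℝ)) (_ : IsCube Q ∧ Q ⊆ Q₀), ENNReal.ofReal (meanOsc f Q)

/-- The Garsia–Rodemich functional `GaRo_p(f,Q₀)`: the least constant `C` such that
for every packing `{Qᵢ}` of `Q₀`,
`Σᵢ (1/|Qᵢ|) ∫_{Qᵢ}∫_{Qᵢ} |f(x)-f(y)| dx dy ≤ C (Σᵢ |Qᵢ|)^{1/p'}` where `1/p' = 1 - 1/p`. -/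
def GaRo {n : ℕ} (p : ℝ) (f : (Fin n → ℝ) → ℝ) (Q₀ : Set (Fin n → ℝ)) : ℝ≥0∞ :=
  sInf {C : ℝ≥0∞ | ∀ Q : ℕ → Set (Fin n → ℝ), IsPackingIn Q₀ Q →
    (∑' i, (volume (Q i))⁻¹ *
        ∫⁻ x in Q i, ∫⁻ y in Q i, ENNReal.ofReal |f x - f y|) ≤
      C * (∑' i, volume (Q i)) ^ (1 - 1 / p)}

section auxGaRo13
open Filter Topology

section helpers

variable {α : Type*} [MeasurableSpace α] (μ : Measure α) (f : α → ℝ)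

lemma distFun_antitone : Antitone (distFun μ f) := fun _ _ h =>
  measure_mono fun _ hx => lt_of_le_of_lt h hx

lemma distFun_measurable : Measurable (distFun μ f) :=
  (distFun_antitone μ f).measurable

lemma rearr_antitone : Antitone (rearr μ f) := by
  intro u v h
  refine sInf_le_sInf (image_mono fun s hs => ?_)
  exact ⟨hs.1, hs.2.trans (ENNReal.ofReal_le_ofReal h)⟩

lemma rearr_measurable : Measurable (rearr μ f) :=
  (rearr_antitone μ f).measurable

lemma rearr_le {u s : ℝ} (hs : 0 < s) (h : distFun μ f s ≤ ENNReal.ofReal u) :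
    rearr μ f u ≤ ENNReal.ofReal s :=
  sInf_le ⟨s, ⟨hs, h⟩, rfl⟩

lemma distFun_le {u v : ℝ} (h : rearr μ f u < ENNReal.ofReal v) :
    distFun μ f v ≤ ENNReal.ofReal u := by
  obtain ⟨b, hb, hblt⟩ := sInf_lt_iff.mp h
  obtain ⟨s, ⟨hs0, hsd⟩, rfl⟩ := hb
  have hsv : s ≤ v := by
    by_contra hvs
    exact absurd hblt (not_lt.2 (ENNReal.ofReal_le_ofReal (le_of_not_ge hvs)))
  exact (distFun_antitone μ f hsv).trans hsd

lemma le_rearr {u v : ℝ} (h : ENNReal.ofReal u < distFun μ f v) :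
    ENNReal.ofReal v ≤ rearr μ f u :=
  le_of_not_gt fun hc => absurd (distFun_le μ f hc) (not_le.2 h)

end helpers

/-- volume of `{u | 0 < u ∧ ofReal u < d}` is `d`. -/
lemma volume_setOf_lt (d : ℝ≥0∞) : volume {u : ℝ | 0 < u ∧ ENNReal.ofReal u < d} = d := by
  rcases eq_or_ne d ⊤ with rfl | hd
  · have : {u : ℝ | 0 < u ∧ ENNReal.ofReal u < ⊤} = Ioi 0 := by
      ext u; simp [ENNReal.ofReal_lt_top]
    rw [this, Real.volume_Ioi]
  · have : {u : ℝ | 0 < u ∧ ENNReal.ofReal u < d} = Ioo 0 d.toReal := by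
      ext u
      simp only [mem_setOf_eq, mem_Ioo]
      exact and_congr_right fun hu => ENNReal.ofReal_lt_iff_lt_toReal hu.le hd
    rw [this, Real.volume_Ioo, sub_zero, ENNReal.ofReal_toReal hd]

/-- `a - c` as the volume of a slab. -/
lemma sub_eq_volume (a : ℝ≥0∞) {c : ℝ≥0∞} (hc : c ≠ ⊤) :
    a - c = volume ({v : ℝ | ENNReal.ofReal v < a} ∩ Ioi c.toReal) := by
  rcases eq_or_ne a ⊤ with rfl | ha
  · have : {v : ℝ | ENNReal.ofReal v < ⊤} ∩ Ioi c.toReal = Ioi c.toReal := by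
      ext v; simp [ENNReal.ofReal_lt_top]
    rw [this, Real.volume_Ioi, ENNReal.top_sub hc]
  · have hset : {v : ℝ | ENNReal.ofReal v < a} ∩ Ioi c.toReal = Ioo c.toReal a.toReal := by
      ext v
      simp only [mem_inter_iff, mem_setOf_eq, mem_Ioi, mem_Ioo]
      constructor
      · rintro ⟨h1, h2⟩
        exact ⟨h2, (ENNReal.ofReal_lt_iff_lt_toReal (le_trans ENNReal.toReal_nonneg h2.le) ha).1 h1⟩
      · rintro ⟨h1, h2⟩
        exact ⟨(ENNReal.ofReal_lt_iff_lt_toReal (le_trans ENNReal.toReal_nonneg h1.le) ha).2 h2, h1⟩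
    rw [hset, Real.volume_Ioo, ← ENNReal.ofReal_toReal ha, ← ENNReal.ofReal_toReal hc,
      ENNReal.ofReal_sub _ ENNReal.toReal_nonneg]
    norm_num

/-- Monotone convergence for integrals over shrinking-left `Ioi`. -/
lemma setLIntegral_Ioi_eq_iSup {D : ℝ → ℝ≥0∞} (hD : Measurable D) (a : ℝ) :
    ∫⁻ v in Ioi a, D v = ⨆ n : ℕ, ∫⁻ v in Ioi (a + ((n : ℝ) + 1)⁻¹), D v := by
  have hunion : Ioi a = ⋃ n : ℕ, Ioi (a + ((n : ℝ) + 1)⁻¹) := by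
    ext v
    simp only [mem_Ioi, mem_iUnion]
    constructor
    · intro hv
      obtain ⟨n, hn⟩ := exists_nat_one_div_lt (sub_pos.2 hv)
      exact ⟨n, by rw [one_div] at hn; linarith⟩
    · rintro ⟨n, hn⟩
      have : (0:ℝ) < ((n : ℝ) + 1)⁻¹ := by positivity
      linarith
  have hmono : Monotone fun n : ℕ => Ioi (a + ((n : ℝ) + 1)⁻¹) := by
    intro m n hmn
    apply Ioi_subset_Ioi
    have : ((n : ℝ) + 1)⁻¹ ≤ ((m : ℝ) + 1)⁻¹ := by
      apply inv_anti₀ (by positivity)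
      exact_mod_cast by omega
    linarith
  simp only [← withDensity_apply _ measurableSet_Ioi]
  rw [hunion, Directed.measure_iUnion (hmono.directed_le)]

/-- shift lemma : if `H v ≤ G w` whenever `a ≤ w < v` then `∫_{Ioi a} H ≤ ∫_{Ioi a} G`. -/
lemma lintegral_Ioi_le_of_shift {G H : ℝ → ℝ≥0∞} (hG : Measurable G) (hH : Measurable H)
    (a : ℝ) (h : ∀ v w, a ≤ w → w < v → H v ≤ G w) :
    ∫⁻ v in Ioi a, H v ≤ ∫⁻ v in Ioi a, G v := by
  rw [setLIntegral_Ioi_eq_iSup hH a]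
  refine iSup_le fun n => ?_
  set ε : ℝ := ((n : ℝ) + 1)⁻¹ with hε
  have hε0 : 0 < ε := by positivity
  have step1 : ∫⁻ v in Ioi (a + ε), H v ≤ ∫⁻ v in Ioi (a + ε), G (v - ε) := by
    refine setLIntegral_mono (hG.comp (by fun_prop)) fun v hv => ?_
    have hv' : a + ε < v := hv
    exact h v (v - ε) (by linarith) (by linarith)
  have step2 : ∫⁻ v in Ioi (a + ε), G (v - ε) = ∫⁻ w in Ioi a, G w := by
    have h1 : ∀ g : ℝ → ℝ≥0∞, (∫⁻ v, g v ∂(volume : Measure ℝ)) = ∫⁻ w, g (w + ε) ∂volume :=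
      fun g => (lintegral_add_right_eq_self g ε).symm
    rw [← lintegral_indicator measurableSet_Ioi, ← lintegral_indicator measurableSet_Ioi]
    rw [h1 (fun v => (Ioi (a+ε)).indicator (fun v => G (v - ε)) v)]
    congr 1
    ext w
    by_cases hw : w ∈ Ioi a
    · have hw' : w + ε ∈ Ioi (a + ε) := by simp only [mem_Ioi] at hw ⊢; linarith
      rw [indicator_of_mem hw', indicator_of_mem hw]
      simp
    · have hw' : w + ε ∉ Ioi (a + ε) := by simp only [mem_Ioi] at hw ⊢; intro hc; apply hw; linarith
      rw [indicator_of_notMem hw', indicator_of_notMem hw]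
  exact step1.trans step2.le

lemma lint_ind {P : ℝ → Prop} [DecidablePred P] (hA : MeasurableSet {v : ℝ | P v}) (S : Set ℝ) :
    ∫⁻ v in S, (if P v then (1 : ℝ≥0∞) else 0) ∂volume = volume ({v : ℝ | P v} ∩ S) := by
  have h : ∀ v : ℝ, (if P v then (1 : ℝ≥0∞) else 0) = {v : ℝ | P v}.indicator 1 v := by
    intro v; simp [Set.indicator_apply]
  simp_rw [h]
  rw [lintegral_indicator_one hA, Measure.restrict_apply hA]

/-- Key identity: `∫₀ᵗ f* - t f*(t) = ∫_{f*(t)}^∞ λ_f`. -/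
lemma key_identity {α : Type*} [MeasurableSpace α] (μ : Measure α) (f : α → ℝ)
    {t : ℝ} (ht : 0 < t) (hc : rearr μ f t ≠ ⊤) :
    (∫⁻ u in Ioc 0 t, rearr μ f u) - ENNReal.ofReal t * rearr μ f t
      = ∫⁻ v in Ioi (rearr μ f t).toReal, distFun μ f v := by
  set c : ℝ≥0∞ := rearr μ f t with hcdef
  set cR : ℝ := c.toReal with hcR
  have hcR0 : 0 ≤ cR := ENNReal.toReal_nonneg
  have hceq : ENNReal.ofReal cR = c := ENNReal.ofReal_toReal hc
  -- Step 2: pull out the constant.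
  have h2 : ∫⁻ u in Ioc 0 t, (rearr μ f u - c) =
      (∫⁻ u in Ioc 0 t, rearr μ f u) - ENNReal.ofReal t * c := by
    rw [lintegral_sub measurable_const]
    · rw [setLIntegral_const, Real.volume_Ioc, sub_zero, mul_comm]
    · rw [setLIntegral_const, Real.volume_Ioc, sub_zero]
      exact ENNReal.mul_ne_top hc ENNReal.ofReal_ne_top
    · refine (ae_restrict_iff' measurableSet_Ioc).2 (ae_of_all _ fun u hu => ?_)
      exact rearr_antitone μ f hu.2
  rw [← h2]
  -- Step 1: pointwise slab representation + Tonelli.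
  have hpoint : ∀ u : ℝ, rearr μ f u - c =
      ∫⁻ v in Ioi cR, (if ENNReal.ofReal v < rearr μ f u then 1 else 0) := by
    intro u
    rw [sub_eq_volume (rearr μ f u) hc]
    have hAm : MeasurableSet {v : ℝ | ENNReal.ofReal v < rearr μ f u} :=
      measurableSet_lt ENNReal.measurable_ofReal measurable_const
    rw [lint_ind hAm]
  simp_rw [hpoint]
  -- Tonelli swap
  have hmeas : Measurable (Function.uncurry fun u v =>
      (if ENNReal.ofReal v < rearr μ f u then (1 : ℝ≥0∞) else 0)) := by
    apply Measurable.ite _ measurable_const measurable_const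
    exact measurableSet_lt (ENNReal.measurable_ofReal.comp measurable_snd)
      ((rearr_measurable μ f).comp measurable_fst)
  rw [lintegral_lintegral_swap hmeas.aemeasurable]
  -- inner integral computations
  have hinner : ∀ v ∈ Ioi cR, (∫⁻ u in Ioc 0 t,
      (if ENNReal.ofReal v < rearr μ f u then (1:ℝ≥0∞) else 0)) =
      volume {u : ℝ | 0 < u ∧ ENNReal.ofReal v < rearr μ f u} := by
    intro v hv
    have hAm : MeasurableSet {u : ℝ | ENNReal.ofReal v < rearr μ f u} :=
      measurableSet_lt measurable_const (rearr_measurable μ f)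
    rw [lint_ind hAm]
    congr 1
    ext u
    simp only [mem_inter_iff, mem_setOf_eq, mem_Ioc]
    constructor
    · rintro ⟨h1, h2, h3⟩; exact ⟨h2, h1⟩
    · rintro ⟨h1, h2⟩
      refine ⟨h2, h1, ?_⟩
      by_contra htu
      push_neg at htu
      have : rearr μ f u ≤ c := rearr_antitone μ f htu.le
      have hle : c ≤ ENNReal.ofReal v := by
        rw [← hceq]; exact ENNReal.ofReal_le_ofReal (le_of_lt hv)
      exact absurd h2 (not_lt.2 (this.trans hle))
  rw [setLIntegral_congr_fun measurableSet_Ioi hinner]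
  -- sandwich
  set G : ℝ → ℝ≥0∞ := fun v => volume {u : ℝ | 0 < u ∧ ENNReal.ofReal v < rearr μ f u} with hG
  set H : ℝ → ℝ≥0∞ := fun v => volume {u : ℝ | 0 < u ∧ ENNReal.ofReal v ≤ rearr μ f u} with hH
  have hGanti : Antitone G := by
    intro v v' hvv'
    exact measure_mono fun u hu => ⟨hu.1, lt_of_le_of_lt (ENNReal.ofReal_le_ofReal hvv') hu.2⟩
  have hHanti : Antitone H := by
    intro v v' hvv'
    exact measure_mono fun u hu => ⟨hu.1, le_trans (ENNReal.ofReal_le_ofReal hvv') hu.2⟩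
  have hGm : Measurable G := hGanti.measurable
  have hHm : Measurable H := hHanti.measurable
  have hGle : ∀ v ∈ Ioi cR, G v ≤ distFun μ f v := by
    intro v hv
    rw [← volume_setOf_lt (distFun μ f v)]
    refine measure_mono fun u hu => ⟨hu.1, ?_⟩
    by_contra hcon
    push_neg at hcon
    have hv0 : 0 < v := lt_of_le_of_lt hcR0 hv
    exact absurd hu.2 (not_lt.2 (rearr_le μ f hv0 hcon))
  have hDle : ∀ v : ℝ, distFun μ f v ≤ H v := by
    intro v
    rw [← volume_setOf_lt (distFun μ f v)]
    exact measure_mono fun u hu => ⟨hu.1, le_rearr μ f hu.2⟩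
  have hshift : ∀ v w, cR ≤ w → w < v → H v ≤ G w := by
    intro v w hw hwv
    have hv0 : 0 < v := lt_of_le_of_lt (hcR0.trans hw) hwv
    refine measure_mono fun u hu => ⟨hu.1, lt_of_lt_of_le ?_ hu.2⟩
    exact (ENNReal.ofReal_lt_ofReal_iff hv0).2 hwv
  have hle1 : ∫⁻ v in Ioi cR, G v ≤ ∫⁻ v in Ioi cR, distFun μ f v :=
    setLIntegral_mono (distFun_measurable μ f) hGle
  have hle2 : ∫⁻ v in Ioi cR, distFun μ f v ≤ ∫⁻ v in Ioi cR, H v :=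
    setLIntegral_mono hHm fun v _ => hDle v
  have hle3 : ∫⁻ v in Ioi cR, H v ≤ ∫⁻ v in Ioi cR, G v :=
    lintegral_Ioi_le_of_shift hGm hHm cR hshift
  exact le_antisymm hle1 (hle2.trans hle3)

lemma rpow_anti {e : ℝ} (he : e < 0) {x y : ℝ≥0∞} (h : x ≤ y) : y ^ e ≤ x ^ e := by
  have h2 := ENNReal.inv_le_inv.2 (ENNReal.rpow_le_rpow h (neg_nonneg.2 he.le))
  rwa [← ENNReal.rpow_neg, ← ENNReal.rpow_neg, neg_neg] at h2

lemma iSup_ofReal_rpow {a e : ℝ} (ha : 0 < a) (he : e < 0) :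
    ⨆ (s : ℝ) (_ : a < s), ENNReal.ofReal s ^ e = ENNReal.ofReal a ^ e := by
  apply le_antisymm
  · exact iSup₂_le fun s hs => rpow_anti he (ENNReal.ofReal_le_ofReal hs.le)
  · have hcont : Tendsto (fun s : ℝ => ENNReal.ofReal s ^ e) (𝓝[>] a)
        (𝓝 (ENNReal.ofReal a ^ e)) := by
      exact Filter.Tendsto.mono_left
        ((ENNReal.continuous_rpow_const.tendsto _).comp (ENNReal.continuous_ofReal.tendsto a))
        nhdsWithin_le_nhds
    exact le_of_tendsto hcont (eventually_nhdsWithin_of_forall fun s hs =>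
      le_iSup₂ (f := fun s (_ : a < s) => ENNReal.ofReal s ^ e) s hs)

lemma term_eq {α : Type*} [MeasurableSpace α] (μ : Measure α) (f : α → ℝ) {p t : ℝ}
    (ht : 0 < t) (hc : rearr μ f t ≠ ⊤) :
    ENNReal.ofReal t ^ (1 / p) * (dstar μ f t - rearr μ f t)
      = ENNReal.ofReal t ^ (1 / p - 1) * ∫⁻ v in Ioi (rearr μ f t).toReal, distFun μ f v := by
  have hT0 : ENNReal.ofReal t ≠ 0 := (ENNReal.ofReal_pos.2 ht).ne'
  have hTt : ENNReal.ofReal t ≠ ⊤ := ENNReal.ofReal_ne_top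
  have h1 : dstar μ f t - rearr μ f t
      = ((∫⁻ u in Ioc 0 t, rearr μ f u) - ENNReal.ofReal t * rearr μ f t) / ENNReal.ofReal t := by
    rw [ENNReal.sub_div (fun _ _ => hT0)]
    have : ENNReal.ofReal t * rearr μ f t / ENNReal.ofReal t = rearr μ f t := by
      rw [mul_comm, mul_div_assoc, ENNReal.div_self hT0 hTt, mul_one]
    rw [this]; rfl
  rw [h1, key_identity μ f ht hc]
  rw [ENNReal.div_eq_inv_mul, ← ENNReal.rpow_neg_one (ENNReal.ofReal t),
    show (1 / p - 1 : ℝ) = 1 / p + (-1) by ring, ENNReal.rpow_add _ _ hT0 hTt]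
  ring

end auxGaRo13

/-- `‖f‖^#_{L(p,∞)} = ‖f‖^{##}_{L(p,∞)}`, i.e.
`sup_{s>0} s^{1/p}(f**(s) - f*(s)) = sup_{t>0} (λ_f(t))^{-(1-1/p)} ∫_t^∞ λ_f(s) ds`. -/
theorem sharpNorm_eq_sharpSharpNorm {α : Type*} [MeasurableSpace α] (μ : Measure α)
    (p : ℝ) (hp : 1 < p) (f : α → ℝ) (hf : Measurable f) :
    sharpNorm μ p f = sharpSharpNorm μ p f := by
  have hp0 : 0 < p := lt_trans one_pos hp
  have hinv : 1 / p < 1 := by rw [div_lt_one hp0]; exact hp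
  have he : 1 / p - 1 < 0 := by linarith
  have he' : -(1 - 1 / p) < 0 := by linarith
  have hexp : -(1 - 1 / p) = 1 / p - 1 := by ring
  apply le_antisymm
  · refine iSup₂_le fun t ht => ?_
    rcases eq_or_ne (rearr μ f t) ⊤ with hc | hc
    · rw [hc, ENNReal.sub_top, mul_zero]
      exact zero_le
    · rw [term_eq μ f ht hc]
      set cR := (rearr μ f t).toReal with hcRdef
      have hcR0 : 0 ≤ cR := ENNReal.toReal_nonneg
      rw [setLIntegral_Ioi_eq_iSup (distFun_measurable μ f) cR, ENNReal.mul_iSup]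
      refine iSup_le fun n => ?_
      set u := cR + ((n : ℝ) + 1)⁻¹ with hudef
      have hn : (0:ℝ) < ((n : ℝ) + 1)⁻¹ := by positivity
      have hu0 : 0 < u := by positivity
      have hd : distFun μ f u ≤ ENNReal.ofReal t := by
        apply distFun_le μ f
        rw [← ENNReal.ofReal_toReal hc]
        exact (ENNReal.ofReal_lt_ofReal_iff hu0).2 (by rw [hudef]; linarith)
      calc ENNReal.ofReal t ^ (1 / p - 1) * ∫⁻ v in Ioi u, distFun μ f v
          ≤ distFun μ f u ^ (-(1 - 1 / p)) * ∫⁻ v in Ioi u, distFun μ f v := by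
            apply mul_le_mul_left
            rw [hexp]
            exact rpow_anti he hd
        _ ≤ sharpSharpNorm μ p f := le_iSup₂ (f := fun t (_ : (0:ℝ) < t) =>
              distFun μ f t ^ (-(1 - 1 / p)) * ∫⁻ s in Set.Ioi t, distFun μ f s) u hu0
  · refine iSup₂_le fun u hu => ?_
    by_cases htop : distFun μ f u = ⊤
    · rw [htop, ENNReal.top_rpow_of_neg he', zero_mul]
      exact zero_le
    by_cases h0 : distFun μ f u = 0
    · have hL : ∫⁻ v in Ioi u, distFun μ f v = 0 := by
        refine le_antisymm ?_ zero_le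
        calc ∫⁻ v in Ioi u, distFun μ f v
            ≤ ∫⁻ _ in Ioi u, 0 := setLIntegral_mono measurable_const
              (fun v hv => h0 ▸ distFun_antitone μ f (le_of_lt hv))
          _ = 0 := by simp
      rw [hL, mul_zero]
      exact zero_le
    · set a := (distFun μ f u).toReal with hadef
      have ha0 : 0 < a := ENNReal.toReal_pos h0 htop
      have haeq : ENNReal.ofReal a = distFun μ f u := ENNReal.ofReal_toReal htop
      set L := ∫⁻ v in Ioi u, distFun μ f v with hLdef
      have hstep : ∀ s : ℝ, a < s → ENNReal.ofReal s ^ (1 / p - 1) * L ≤ sharpNorm μ p f := by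
        intro s hs
        have hs0 : 0 < s := ha0.trans hs
        have h1 : distFun μ f u ≤ ENNReal.ofReal s := by
          rw [← haeq]; exact ENNReal.ofReal_le_ofReal hs.le
        have hcs : rearr μ f s ≤ ENNReal.ofReal u := rearr_le μ f hu h1
        have hcstop : rearr μ f s ≠ ⊤ := (lt_of_le_of_lt hcs ENNReal.ofReal_lt_top).ne
        have hcsR : (rearr μ f s).toReal ≤ u := ENNReal.toReal_le_of_le_ofReal hu.le hcs
        have hLle : L ≤ ∫⁻ v in Ioi (rearr μ f s).toReal, distFun μ f v :=
          lintegral_mono_set (Ioi_subset_Ioi hcsR)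
        calc ENNReal.ofReal s ^ (1 / p - 1) * L
            ≤ ENNReal.ofReal s ^ (1 / p - 1)
              * ∫⁻ v in Ioi (rearr μ f s).toReal, distFun μ f v := mul_le_mul_right hLle _
          _ = ENNReal.ofReal s ^ (1 / p) * (dstar μ f s - rearr μ f s) :=
              (term_eq μ f hs0 hcstop).symm
          _ ≤ sharpNorm μ p f := le_iSup₂ (f := fun s (_ : (0:ℝ) < s) =>
              ENNReal.ofReal s ^ (1 / p) * (dstar μ f s - rearr μ f s)) s hs0
      calc distFun μ f u ^ (-(1 - 1 / p)) * L
          = (⨆ (s : ℝ) (_ : a < s), ENNReal.ofReal s ^ (1 / p - 1)) * L := by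
            rw [iSup_ofReal_rpow ha0 he, haeq, hexp]
        _ = ⨆ (s : ℝ) (_ : a < s), ENNReal.ofReal s ^ (1 / p - 1) * L := by
            simp_rw [ENNReal.iSup_mul]
        _ ≤ sharpNorm μ p f := iSup₂_le hstep
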